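/- Keller's conjecture holds for tilings of class T_2 in dimension 2: in every cube tiling of the discrete torus (ℤ/4ℤ)^2 by 4 pairwise disjoint cubes, there exist two cubes at positions v, w such that v - w = 2e_i for some standard basis vector e_i (i.e., the two cubes share a complete facet). -/

import Mathlib

/-- The cube `v + {0,1}^n` in the discrete torus `(ℤ/4ℤ)^n`. -/
def cube {n : ℕ} (v : Fin n → ZMod 4) : Set (Fin n → ZMod 4) :=
  {x | ∀ i, x i = v i ∨ x i = v i + 1}

lemma coord_pt (a b : ZMod 4) (h : a - b ≠ 2) :
    ((if a - b = 3 then a + 1 else a) = a ∨ (if a - b = 3 then a + 1 else a) = a + 1) ∧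
    ((if a - b = 3 then a + 1 else a) = b ∨ (if a - b = 3 then a + 1 else a) = b + 1) := by
  revert h; revert a b; decide

lemma disj_coord (v w : Fin 2 → ZMod 4) (h : Disjoint (cube v) (cube w)) :
    v 0 - w 0 = 2 ∨ v 1 - w 1 = 2 := by
  by_contra hc
  push_neg at hc
  obtain ⟨h0, h1⟩ := hc
  set x : Fin 2 → ZMod 4 := fun i => if v i - w i = 3 then v i + 1 else v i with hx
  have hxv : x ∈ cube v := by
    intro i; fin_cases i
    · exact (coord_pt (v 0) (w 0) h0).1
    · exact (coord_pt (v 1) (w 1) h1).1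
  have hxw : x ∈ cube w := by
    intro i; fin_cases i
    · exact (coord_pt (v 0) (w 0) h0).2
    · exact (coord_pt (v 1) (w 1) h1).2
  exact Set.disjoint_left.mp h hxv hxw

set_option synthInstance.maxSize 1000 in
set_option maxHeartbeats 2000000 in
lemma aux : ∀ a0 a1 b0 b1 c0 c1 d0 d1 : ZMod 4,
    ((a0 = 0 ∨ a0 = 3) ∧ (a1 = 0 ∨ a1 = 3) ∧
    (b0 = 1 ∨ b0 = 2) ∧ (b1 = 0 ∨ b1 = 3) ∧
    (c0 = 0 ∨ c0 = 3) ∧ (c1 = 1 ∨ c1 = 2) ∧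
    (d0 = 1 ∨ d0 = 2) ∧ (d1 = 1 ∨ d1 = 2) ∧
    (a0 - b0 = 2 ∨ a1 - b1 = 2) ∧ (a0 - c0 = 2 ∨ a1 - c1 = 2) ∧
    (a0 - d0 = 2 ∨ a1 - d1 = 2) ∧ (b0 - c0 = 2 ∨ b1 - c1 = 2) ∧
    (b0 - d0 = 2 ∨ b1 - d1 = 2) ∧ (c0 - d0 = 2 ∨ c1 - d1 = 2)) →
    ((a0 - b0 = 2 ∧ a1 = b1) ∨ (a1 - b1 = 2 ∧ a0 = b0) ∨
     (a0 - c0 = 2 ∧ a1 = c1) ∨ (a1 - c1 = 2 ∧ a0 = c0) ∨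
     (a0 - d0 = 2 ∧ a1 = d1) ∨ (a1 - d1 = 2 ∧ a0 = d0) ∨
     (b0 - c0 = 2 ∧ b1 = c1) ∨ (b1 - c1 = 2 ∧ b0 = c0) ∨
     (b0 - d0 = 2 ∧ b1 = d1) ∨ (b1 - d1 = 2 ∧ b0 = d0) ∨
     (c0 - d0 = 2 ∧ c1 = d1) ∨ (c1 - d1 = 2 ∧ c0 = d0)) := by
  decide

theorem keller_dim2 (P : Finset (Fin 2 → ZMod 4))
    (hcard : P.card = 4)
    (hP : (P : Set (Fin 2 → ZMod 4)).Pairwise fun v w => Disjoint (cube v) (cube w))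
    (hcover : (⋃ v ∈ P, cube v) = Set.univ) :
    ∃ v ∈ P, ∃ w ∈ P, ∃ i, v i - w i = 2 ∧ ∀ j, j ≠ i → v j = w j := by
  have hmem : ∀ p : Fin 2 → ZMod 4, ∃ v ∈ P, p ∈ cube v := by
    intro p
    have : p ∈ ⋃ v ∈ P, cube v := hcover ▸ Set.mem_univ p
    simpa using this
  obtain ⟨a, haP, ha⟩ := hmem ![0, 0]
  obtain ⟨b, hbP, hb⟩ := hmem ![2, 0]
  obtain ⟨c, hcP, hc⟩ := hmem ![0, 2]
  obtain ⟨d, hdP, hd⟩ := hmem ![2, 2]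
  have faceh : ∀ (x : ZMod 4) (y : ZMod 4), x = y ∨ x = y + 1 → (y = x ∨ y = x - 1) := by
    decide
  -- extract coordinate constraints
  have ha0 : a 0 = 0 ∨ a 0 = 3 := by have := faceh 0 (a 0) (ha 0); simpa [show (0:ZMod 4) - 1 = 3 from by decide, show (-1:ZMod 4) = 3 from by decide, show (2:ZMod 4) - 1 = 1 from by decide] using this
  have ha1 : a 1 = 0 ∨ a 1 = 3 := by have := faceh 0 (a 1) (ha 1); simpa [show (0:ZMod 4) - 1 = 3 from by decide, show (-1:ZMod 4) = 3 from by decide, show (2:ZMod 4) - 1 = 1 from by decide] using this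
  have hb0 : b 0 = 2 ∨ b 0 = 1 := by have := faceh 2 (b 0) (hb 0); simpa [show (0:ZMod 4) - 1 = 3 from by decide, show (-1:ZMod 4) = 3 from by decide, show (2:ZMod 4) - 1 = 1 from by decide] using this
  have hb1 : b 1 = 0 ∨ b 1 = 3 := by have := faceh 0 (b 1) (hb 1); simpa [show (0:ZMod 4) - 1 = 3 from by decide, show (-1:ZMod 4) = 3 from by decide, show (2:ZMod 4) - 1 = 1 from by decide] using this
  have hc0 : c 0 = 0 ∨ c 0 = 3 := by have := faceh 0 (c 0) (hc 0); simpa [show (0:ZMod 4) - 1 = 3 from by decide, show (-1:ZMod 4) = 3 from by decide, show (2:ZMod 4) - 1 = 1 from by decide] using this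
  have hc1 : c 1 = 2 ∨ c 1 = 1 := by have := faceh 2 (c 1) (hc 1); simpa [show (0:ZMod 4) - 1 = 3 from by decide, show (-1:ZMod 4) = 3 from by decide, show (2:ZMod 4) - 1 = 1 from by decide] using this
  have hd0 : d 0 = 2 ∨ d 0 = 1 := by have := faceh 2 (d 0) (hd 0); simpa [show (0:ZMod 4) - 1 = 3 from by decide, show (-1:ZMod 4) = 3 from by decide, show (2:ZMod 4) - 1 = 1 from by decide] using this
  have hd1 : d 1 = 2 ∨ d 1 = 1 := by have := faceh 2 (d 1) (hd 1); simpa [show (0:ZMod 4) - 1 = 3 from by decide, show (-1:ZMod 4) = 3 from by decide, show (2:ZMod 4) - 1 = 1 from by decide] using this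
  -- distinctness
  have hne : ∀ (x y : ZMod 4), (x = 0 ∨ x = 3) → (y = 2 ∨ y = 1) → x ≠ y := by decide
  have nab : a ≠ b := fun h => hne (a 0) (b 0) ha0 hb0 (by rw [h])
  have nac : a ≠ c := fun h => hne (a 1) (c 1) ha1 hc1 (by rw [h])
  have nad : a ≠ d := fun h => hne (a 0) (d 0) ha0 hd0 (by rw [h])
  have nbc : b ≠ c := fun h => (hne (c 0) (b 0) hc0 hb0 (by rw [h])).elim
  have nbd : b ≠ d := fun h => hne (b 1) (d 1) hb1 hd1 (by rw [h])
  have ncd : c ≠ d := fun h => hne (c 0) (d 0) hc0 hd0 (by rw [h])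
  have D : ∀ v w : Fin 2 → ZMod 4, v ∈ P → w ∈ P → v ≠ w →
      (v 0 - w 0 = 2 ∨ v 1 - w 1 = 2) := fun v w hv hw h =>
    disj_coord v w (hP hv hw h)
  have mk : ∀ v w : Fin 2 → ZMod 4, v ∈ P → w ∈ P →
      ((v 0 - w 0 = 2 ∧ v 1 = w 1) ∨ (v 1 - w 1 = 2 ∧ v 0 = w 0)) →
      ∃ v ∈ P, ∃ w ∈ P, ∃ i, v i - w i = 2 ∧ ∀ j, j ≠ i → v j = w j := by
    rintro v w hv hw (⟨h1, h2⟩ | ⟨h1, h2⟩)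
    · exact ⟨v, hv, w, hw, 0, h1, fun j hj => by fin_cases j <;> simp_all⟩
    · exact ⟨v, hv, w, hw, 1, h1, fun j hj => by fin_cases j <;> simp_all⟩
  have key := aux (a 0) (a 1) (b 0) (b 1) (c 0) (c 1) (d 0) (d 1)
    ⟨ha0, ha1, hb0.symm, hb1, hc0, hc1.symm, hd0.symm, hd1.symm,
    D a b haP hbP nab, D a c haP hcP nac, D a d haP hdP nad,
    D b c hbP hcP nbc, D b d hbP hdP nbd, D c d hcP hdP ncd⟩
  rcases key with h|h|h|h|h|h|h|h|h|h|h|h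
  · exact mk a b haP hbP (Or.inl h)
  · exact mk a b haP hbP (Or.inr h)
  · exact mk a c haP hcP (Or.inl h)
  · exact mk a c haP hcP (Or.inr h)
  · exact mk a d haP hdP (Or.inl h)
  · exact mk a d haP hdP (Or.inr h)
  · exact mk b c hbP hcP (Or.inl h)
  · exact mk b c hbP hcP (Or.inr h)
  · exact mk b d hbP hdP (Or.inl h)
  · exact mk b d hbP hdP (Or.inr h)
  · exact mk c d hcP hdP (Or.inl h)
  · exact mk c d hcP hdP (Or.inr h)
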